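/- (Measure preservation of the refraction step in reduced coordinates.) Fix ε > 0, fix the coordinates x₂, …, x_d and r₂, …, r_d of x, r ∈ ℝ^d, and let ΔU : ℝ^d → ℝ be differentiable. For (x₁, r₁) with x₁ < 0 and r₁ > 0, set y(x₁, r₁) = x − (x₁/r₁) r (the boundary-hitting point), W(x₁, r₁) = ΔU(y(x₁, r₁)), and, on the region where r₁² > 2W(x₁, r₁), define the refraction map γ(x₁, r₁) = (x'₁, r'₁) with r'₁ = √(r₁² − 2W(x₁, r₁)) and x'₁ = (ε + x₁/r₁) · r'₁. Then at every point of this region where γ is differentiable, the Jacobian determinant of γ equals 1; hence γ preserves Lebesgue measure locally on this region. -/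

import Mathlib

private lemma det_prod_formula (L : ℝ × ℝ →ₗ[ℝ] ℝ × ℝ) :
    LinearMap.det L = (L (1,0)).1 * (L (0,1)).2 - (L (0,1)).1 * (L (1,0)).2 := by
  rw [← LinearMap.det_toMatrix (Module.Basis.finTwoProd ℝ), Matrix.det_fin_two]
  simp [LinearMap.toMatrix_apply]

/-- Measure preservation of the refraction step in reduced coordinates: on the
region `x₁ < 0`, `r₁ > 0`, `r₁² > 2 W(x₁, r₁)`, the refraction map
`γ(x₁, r₁) = ((ε + x₁/r₁)·√(r₁² − 2W), √(r₁² − 2W))` has Jacobian determinant 1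
wherever it is differentiable. -/
theorem refraction_step_jacobian_det_one
    (d : ℕ) (hd : 0 < d) (ε : ℝ) (hε : 0 < ε) (x r : Fin d → ℝ)
    (ΔU : (Fin d → ℝ) → ℝ) (hΔU : Differentiable ℝ ΔU)
    (W : ℝ → ℝ → ℝ)
    (hW : ∀ a b : ℝ, W a b =
      ΔU (Function.update x ⟨0, hd⟩ a - (a / b) • Function.update r ⟨0, hd⟩ b))
    (γ : ℝ × ℝ → ℝ × ℝ)
    (hγ : ∀ a b : ℝ, γ (a, b) =
      ((ε + a / b) * Real.sqrt (b ^ 2 - 2 * W a b),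
        Real.sqrt (b ^ 2 - 2 * W a b))) :
    ∀ a b : ℝ, a < 0 → 0 < b → b ^ 2 > 2 * W a b →
      ∀ L : ℝ × ℝ →L[ℝ] ℝ × ℝ, HasFDerivAt γ L (a, b) →
        LinearMap.det (L : ℝ × ℝ →ₗ[ℝ] ℝ × ℝ) = 1 := by
  intro a b ha hb hW2 L hL
  set i0 : Fin d := ⟨0, hd⟩ with hi0
  set V : ℝ → ℝ := fun t =>
    ΔU (Function.update x i0 0 - t • Function.update r i0 0) with hVdef
  -- W in terms of V
  have hWV : ∀ a' t : ℝ, t ≠ 0 → W a' t = V (a' / t) := by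
    intro a' t ht
    rw [hW]
    congr 1
    funext i
    by_cases hi : i = i0
    · subst hi
      simp [Function.update_self, div_mul_cancel₀ _ ht]
    · simp [Function.update_of_ne hi]
  -- V is differentiable
  have hVdiff : Differentiable ℝ V := by
    apply hΔU.comp
    exact (differentiable_const _).sub (differentiable_id.smul_const _)
  have hbne : b ≠ 0 := ne_of_gt hb
  set s : ℝ := a / b with hs
  set c1 : ℝ := deriv V s with hc1
  have hVd : HasDerivAt V c1 s := (hVdiff s).hasDerivAt
  have hWab : W a b = V s := hWV a b hbne
  have hupos : (0:ℝ) < b ^ 2 - 2 * V s := by rw [← hWab]; linarith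
  set u : ℝ := Real.sqrt (b ^ 2 - 2 * V s) with hu
  have hune : u ≠ 0 := ne_of_gt (Real.sqrt_pos.2 hupos)
  -- partial derivative in the a-direction
  have h1 : HasDerivAt (fun t : ℝ => t / b) (1 / b) a := by
    simpa using (hasDerivAt_id a).div_const b
  have h2 : HasDerivAt (fun t : ℝ => V (t / b)) (c1 * (1 / b)) a :=
    by exact HasDerivAt.comp a hVd h1
  have h3 : HasDerivAt (fun t : ℝ => b ^ 2 - 2 * V (t / b))
      (0 - 2 * (c1 * (1 / b))) a :=
    (hasDerivAt_const a (b ^ 2)).sub (h2.const_mul 2)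
  have h4 : HasDerivAt (fun t : ℝ => Real.sqrt (b ^ 2 - 2 * V (t / b)))
      ((0 - 2 * (c1 * (1 / b))) / (2 * u)) a := by
    have := h3.sqrt (by simpa [hs] using ne_of_gt hupos)
    simpa [hs, hu] using this
  set p2 : ℝ := (0 - 2 * (c1 * (1 / b))) / (2 * u) with hp2
  set p1 : ℝ := (0 + 1 / b) * u + (ε + a / b) * p2 with hp1
  have hA : HasDerivAt (fun t : ℝ => γ (t, b)) (p1, p2) a := by
    have h5 : HasDerivAt (fun t : ℝ => (ε + t / b) *
        Real.sqrt (b ^ 2 - 2 * V (t / b))) p1 a := by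
      have := ((hasDerivAt_const a ε).fun_add h1).fun_mul h4
      simpa [hp1, hp2, hs, hu] using this
    have h6 := h5.prodMk h4
    have heq : (fun t : ℝ => γ (t, b)) = fun t : ℝ =>
        ((ε + t / b) * Real.sqrt (b ^ 2 - 2 * V (t / b)),
          Real.sqrt (b ^ 2 - 2 * V (t / b))) := by
      funext t
      rw [hγ, hWV t b hbne]
    rw [heq]
    exact h6
  have hLA : HasDerivAt (fun t : ℝ => γ (t, b)) (L (1, 0)) a := by
    have hline : HasDerivAt (fun t : ℝ => ((t, b) : ℝ × ℝ)) ((1:ℝ), (0:ℝ)) a :=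
      (hasDerivAt_id a).prodMk (hasDerivAt_const a b)
    exact hL.comp_hasDerivAt a hline
  have hL10 : L (1, 0) = (p1, p2) := hLA.unique hA
  -- partial derivative in the b-direction
  have k1 : HasDerivAt (fun t : ℝ => a / t) ((0 * b - a * 1) / b ^ 2) b :=
    (hasDerivAt_const b a).div (hasDerivAt_id b) hbne
  have k2 : HasDerivAt (fun t : ℝ => V (a / t))
      (c1 * ((0 * b - a * 1) / b ^ 2)) b := by exact HasDerivAt.comp b hVd k1
  have k3 : HasDerivAt (fun t : ℝ => t ^ 2 - 2 * V (a / t))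
      (2 * b ^ 1 - 2 * (c1 * ((0 * b - a * 1) / b ^ 2))) b :=
    (hasDerivAt_pow 2 b).sub (k2.const_mul 2)
  have k4 : HasDerivAt (fun t : ℝ => Real.sqrt (t ^ 2 - 2 * V (a / t)))
      ((2 * b ^ 1 - 2 * (c1 * ((0 * b - a * 1) / b ^ 2))) / (2 * u)) b := by
    have := k3.sqrt (by simpa [hs] using ne_of_gt hupos)
    simpa [hs, hu] using this
  set q2 : ℝ := (2 * b ^ 1 - 2 * (c1 * ((0 * b - a * 1) / b ^ 2))) / (2 * u)
    with hq2
  set q1 : ℝ := (0 + (0 * b - a * 1) / b ^ 2) * u + (ε + a / b) * q2 with hq1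
  have hB : HasDerivAt (fun t : ℝ => γ (a, t)) (q1, q2) b := by
    have k5 : HasDerivAt (fun t : ℝ => (ε + a / t) *
        Real.sqrt (t ^ 2 - 2 * V (a / t))) q1 b := by
      have := ((hasDerivAt_const b ε).fun_add k1).fun_mul k4
      simpa [hq1, hq2, hs, hu] using this
    have k6 := k5.prodMk k4
    have heq : (fun t : ℝ => γ (a, t)) =ᶠ[nhds b] fun t : ℝ =>
        ((ε + a / t) * Real.sqrt (t ^ 2 - 2 * V (a / t)),
          Real.sqrt (t ^ 2 - 2 * V (a / t))) := by
      filter_upwards [eventually_ne_nhds hbne] with t ht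
      rw [hγ, hWV a t ht]
    exact k6.congr_of_eventuallyEq heq
  have hLB : HasDerivAt (fun t : ℝ => γ (a, t)) (L (0, 1)) b := by
    have hline : HasDerivAt (fun t : ℝ => ((a, t) : ℝ × ℝ)) ((0:ℝ), (1:ℝ)) b :=
      (hasDerivAt_const b a).prodMk (hasDerivAt_id b)
    exact hL.comp_hasDerivAt b hline
  have hL01 : L (0, 1) = (q1, q2) := hLB.unique hB
  -- compute the determinant
  have hdet := det_prod_formula (L : ℝ × ℝ →ₗ[ℝ] ℝ × ℝ)
  have hcoe : ∀ v : ℝ × ℝ, (L : ℝ × ℝ →ₗ[ℝ] ℝ × ℝ) v = L v := fun _ => rfl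
  rw [hdet, hcoe, hcoe, hL10, hL01]
  simp only [hp1, hp2, hq1, hq2]
  field_simp
  ring
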